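/- Let M be an L^0(m)-module with the locality property and the glueing property. Then M admits a dimensional decomposition: there exists a Borel partition (E_n)_{n∈ℕ∪{∞}} of X such that M has dimension n on E_n for every n∈ℕ with m(E_n)>0, and M does not admit any finite local basis on any positive-measure Borel subset of E_∞. -/

import Mathlib

open MeasureTheory

namespace L0SerreSwan

variable {X : Type*} [MeasurableSpace X]

/-- The commutative ring structure on `L⁰(m)`, the space of (m-a.e. equivalence classes
of) real-valued Borel functions, with pointwise operations. -/
noncomputable instance L0.instCommRing {μ : Measure X} : CommRing (X →ₘ[μ] ℝ) :=
  { (inferInstance : AddCommGroup (X →ₘ[μ] ℝ)),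
    (inferInstance : CommMonoid (X →ₘ[μ] ℝ)) with
    left_distrib := fun f g h => by
      refine AEEqFun.induction_on₃ f g h fun f hf g hg h hh => ?_
      simp only [AEEqFun.mk_add_mk, AEEqFun.mk_mul_mk]
      exact AEEqFun.mk_eq_mk.2 (Filter.Eventually.of_forall fun x => mul_add _ _ _)
    right_distrib := fun f g h => by
      refine AEEqFun.induction_on₃ f g h fun f hf g hg h hh => ?_
      simp only [AEEqFun.mk_add_mk, AEEqFun.mk_mul_mk]
      exact AEEqFun.mk_eq_mk.2 (Filter.Eventually.of_forall fun x => add_mul _ _ _)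
    zero_mul := fun f => by
      refine AEEqFun.induction_on f fun f hf => ?_
      have h0 : (0 : X →ₘ[μ] ℝ) = AEEqFun.mk (fun _ => (0:ℝ)) aestronglyMeasurable_const := rfl
      rw [h0, AEEqFun.mk_mul_mk]
      exact AEEqFun.mk_eq_mk.2 (Filter.Eventually.of_forall fun x => zero_mul _)
    mul_zero := fun f => by
      refine AEEqFun.induction_on f fun f hf => ?_
      have h0 : (0 : X →ₘ[μ] ℝ) = AEEqFun.mk (fun _ => (0:ℝ)) aestronglyMeasurable_const := rfl
      rw [h0, AEEqFun.mk_mul_mk]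
      exact AEEqFun.mk_eq_mk.2 (Filter.Eventually.of_forall fun x => mul_zero _) }

/-- `χ_A`, the (class of the) indicator function of a Borel set `A`, as an element of `L⁰(m)`. -/
noncomputable def chi (μ : Measure X) (A : Set X) (hA : MeasurableSet A) : X →ₘ[μ] ℝ :=
  AEEqFun.mk (A.indicator fun _ => (1:ℝ)) ((measurable_const.indicator hA).aestronglyMeasurable)

/-- `v_1, …, v_n` form a local basis for the `L⁰(m)`-module `M` on the Borel set `A`:
the elements `χ_A • v_i` generate `χ_A • M` over `L⁰(m|_A)` and are independent. -/
def LocalBasisOn (μ : Measure X) {M : Type*} [AddCommGroup M] [Module (X →ₘ[μ] ℝ) M]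
    (A : Set X) (hA : MeasurableSet A) {n : ℕ} (v : Fin n → M) : Prop :=
  (∀ w : M, ∃ f : Fin n → (X →ₘ[μ] ℝ),
      chi μ A hA • w = ∑ i, (chi μ A hA * f i) • v i) ∧
  (∀ f : Fin n → (X →ₘ[μ] ℝ),
      (∑ i, (chi μ A hA * f i) • v i) = 0 → ∀ i, chi μ A hA * f i = 0)

/-- The locality property of an `L⁰(m)`-module `M`: if `χ_{A_n} • v = 0` for all `n`
then `χ_{⋃ₙ A_n} • v = 0`. -/
def Locality (μ : Measure X) (M : Type*) [AddCommGroup M] [Module (X →ₘ[μ] ℝ) M] : Prop :=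
  ∀ (v : M) (A : ℕ → Set X) (hA : ∀ n, MeasurableSet (A n)),
    (∀ n, chi μ (A n) (hA n) • v = 0) →
    chi μ (⋃ n, A n) (MeasurableSet.iUnion hA) • v = 0

/-- The glueing property of an `L⁰(m)`-module `M`: given pairwise disjoint Borel sets
`A_n` and elements `v_n ∈ M`, there is `v ∈ M` with `χ_{A_n} • v = χ_{A_n} • v_n` for all `n`. -/
def Glueing (μ : Measure X) (M : Type*) [AddCommGroup M] [Module (X →ₘ[μ] ℝ) M] : Prop :=
  ∀ (v : ℕ → M) (A : ℕ → Set X) (hA : ∀ n, MeasurableSet (A n)),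
    (∀ n k, n ≠ k → Disjoint (A n) (A k)) →
    ∃ w : M, ∀ n, chi μ (A n) (hA n) • w = chi μ (A n) (hA n) • v n

/-- `(E_n)_{n∈ℕ}` together with `E_∞` is a dimensional decomposition of the
`L⁰(m)`-module `M`: it is a Borel partition of `X`, `M` has dimension `n` on each `E_n`
of positive measure, and `M` admits no finite local basis on any positive-measure
Borel subset of `E_∞`. -/
def DimDecomp (μ : Measure X) (M : Type*) [AddCommGroup M] [Module (X →ₘ[μ] ℝ) M]
    (E : ℕ → Set X) (hE : ∀ n, MeasurableSet (E n))
    (Einf : Set X) (hEinf : MeasurableSet Einf) : Prop :=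
  (∀ n k, n ≠ k → Disjoint (E n) (E k)) ∧
  (∀ n, Disjoint (E n) Einf) ∧
  ((⋃ n, E n) ∪ Einf = Set.univ) ∧
  (∀ n, 0 < μ (E n) → ∃ v : Fin n → M, LocalBasisOn μ (E n) (hE n) v) ∧
  (∀ (A : Set X) (hA : MeasurableSet A), A ⊆ Einf → 0 < μ A →
      ¬ ∃ (n : ℕ) (v : Fin n → M), LocalBasisOn μ A hA v)
section Lemmas

variable {μ : Measure X} {M : Type*} [AddCommGroup M] [Module (X →ₘ[μ] ℝ) M]

theorem chi_congr {A B : Set X} (h : A = B) (hA : MeasurableSet A) (hB : MeasurableSet B) :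
    chi μ A hA = chi μ B hB := by subst h; rfl

theorem chi_mul {A B : Set X} (hA : MeasurableSet A) (hB : MeasurableSet B) :
    chi μ A hA * chi μ B hB = chi μ (A ∩ B) (hA.inter hB) := by
  unfold chi
  rw [AEEqFun.mk_mul_mk]
  refine AEEqFun.mk_eq_mk.2 (Filter.Eventually.of_forall fun x => ?_)
  by_cases hxA : x ∈ A <;> by_cases hxB : x ∈ B <;>
    simp [Set.indicator_apply, hxA, hxB, Set.mem_inter_iff]

theorem mk_eq_zero_iff (f : X → ℝ) (hf : AEStronglyMeasurable f μ) :
    (AEEqFun.mk f hf : X →ₘ[μ] ℝ) = 0 ↔ f =ᵐ[μ] fun _ => (0:ℝ) := by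
  have h0 : (0 : X →ₘ[μ] ℝ) = AEEqFun.mk (fun _ => (0:ℝ)) aestronglyMeasurable_const := rfl
  rw [h0, AEEqFun.mk_eq_mk]

theorem chi_eq_zero {A : Set X} (hA : MeasurableSet A) (h : μ A = 0) :
    chi μ A hA = 0 := by
  unfold chi
  rw [mk_eq_zero_iff]
  have : ∀ᵐ x ∂μ, x ∉ A := (MeasureTheory.measure_eq_zero_iff_ae_notMem).1 h
  filter_upwards [this] with x hx
  simp [Set.indicator_of_notMem hx]

theorem chi_empty : chi μ (∅ : Set X) MeasurableSet.empty = 0 :=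
  chi_eq_zero _ (by simp)

theorem chi_mul_eq_mk {A : Set X} (hA : MeasurableSet A) (g : X →ₘ[μ] ℝ) :
    chi μ A hA * g = AEEqFun.mk (A.indicator (fun _ => (1:ℝ)) * ⇑g)
      (((measurable_const.indicator hA).mul g.measurable).aestronglyMeasurable) := by
  conv_lhs => rw [← AEEqFun.mk_coeFn g]
  unfold chi
  rw [AEEqFun.mk_mul_mk]

/-- If `χ_{A_k} • g = 0` in `L⁰` for all `k`, then `χ_{⋃ A_k} • g = 0`
(function-level locality, automatic in `L⁰`). -/
theorem chi_mul_eq_zero_of_forall {A : ℕ → Set X} (hA : ∀ k, MeasurableSet (A k))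
    (g : X →ₘ[μ] ℝ) (h : ∀ k, chi μ (A k) (hA k) * g = 0) :
    chi μ (⋃ k, A k) (MeasurableSet.iUnion hA) * g = 0 := by
  rw [chi_mul_eq_mk, mk_eq_zero_iff]
  have h' : ∀ k, (A k).indicator (fun _ => (1:ℝ)) * ⇑g =ᵐ[μ] fun _ => (0:ℝ) := fun k => by
    have := h k
    rw [chi_mul_eq_mk, mk_eq_zero_iff] at this
    exact this
  have hall : ∀ᵐ x ∂μ, ∀ k, ((A k).indicator (fun _ => (1:ℝ)) * ⇑g) x = 0 :=
    (MeasureTheory.ae_all_iff).2 h'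
  filter_upwards [hall] with x hx
  by_cases hU : x ∈ ⋃ k, A k
  · obtain ⟨k, hk⟩ := Set.mem_iUnion.1 hU
    have := hx k
    rw [Pi.mul_apply, Set.indicator_of_mem hk, one_mul] at this
    simp [Set.indicator_of_mem hU, this]
  · simp [Set.indicator_of_notMem hU]

end Lemmas
section Lemmas2

variable {μ : Measure X} {M : Type*} [AddCommGroup M] [Module (X →ₘ[μ] ℝ) M]

/-- Glueing of functions in `L⁰` along pairwise disjoint Borel sets. -/
theorem exists_glue_fun {A : ℕ → Set X} (hA : ∀ k, MeasurableSet (A k))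
    (hdisj : ∀ n k, n ≠ k → Disjoint (A n) (A k)) (f : ℕ → (X →ₘ[μ] ℝ)) :
    ∃ g : X →ₘ[μ] ℝ, ∀ k, chi μ (A k) (hA k) * g = chi μ (A k) (hA k) * f k := by
  set u : ℕ → X → ℝ := fun k => (A k).indicator ⇑(f k) with hu_def
  have hu : ∀ k, Measurable (u k) := fun k => (f k).measurable.indicator (hA k)
  have husum : ∀ x, Summable fun k => u k x := by
    intro x
    by_cases hx : ∃ k, x ∈ A k
    · obtain ⟨k0, hk0⟩ := hx
      refine (hasSum_single (f := fun k => u k x) k0 fun k' hk' => ?_).summable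
      exact Set.indicator_of_notMem (Set.disjoint_right.1 (hdisj k' k0 hk') hk0) _
    · push_neg at hx
      have : (fun k => u k x) = fun _ => 0 := funext fun k =>
        Set.indicator_of_notMem (hx k) _
      rw [this]; exact summable_zero
  set G : X → ℝ := fun x => ∑' k, u k x with hG_def
  have hGsum : ∀ x, HasSum (fun k => u k x) (G x) := fun x => (husum x).hasSum
  have hG : Measurable G := by
    refine measurable_of_tendsto_metrizable
      (f := fun n x => ∑ k ∈ Finset.range n, u k x)
      (fun n => Finset.measurable_sum _ fun k _ => hu k) ?_
    rw [tendsto_pi_nhds]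
    exact fun x => (hGsum x).tendsto_sum_nat
  refine ⟨AEEqFun.mk G hG.aestronglyMeasurable, fun k => ?_⟩
  rw [chi_mul_eq_mk, chi_mul_eq_mk]
  refine AEEqFun.mk_eq_mk.2 ?_
  filter_upwards [AEEqFun.coeFn_mk G hG.aestronglyMeasurable] with x hxG
  by_cases hx : x ∈ A k
  · have h1 : ∀ k' ≠ k, u k' x = 0 := fun k' hk' =>
      Set.indicator_of_notMem (Set.disjoint_right.1 (hdisj k' k hk') hx) _
    have hGx : G x = u k x := (hGsum x).unique (hasSum_single k h1)
    have hux : u k x = (f k : X → ℝ) x := Set.indicator_of_mem hx _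
    simp only [Pi.mul_apply, hxG, hGx, hux]
  · simp only [Pi.mul_apply, Set.indicator_of_notMem hx, zero_mul]

/-- A local basis on `A` restricts to a local basis on any Borel subset of `A`. -/
theorem LocalBasisOn.mono {A B : Set X} (hA : MeasurableSet A) (hB : MeasurableSet B)
    (hBA : B ⊆ A) {n : ℕ} {v : Fin n → M} (h : LocalBasisOn μ A hA v) :
    LocalBasisOn μ B hB v := by
  have hchi : chi μ B hB * chi μ A hA = chi μ B hB := by
    rw [chi_mul]; exact chi_congr (Set.inter_eq_left.2 hBA) _ _
  constructor
  · intro w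
    obtain ⟨f, hf⟩ := h.1 w
    refine ⟨f, ?_⟩
    calc chi μ B hB • w = (chi μ B hB * chi μ A hA) • w := by rw [hchi]
      _ = chi μ B hB • (chi μ A hA • w) := (mul_smul _ _ _)
      _ = chi μ B hB • ∑ i, (chi μ A hA * f i) • v i := by rw [hf]
      _ = ∑ i, (chi μ B hB * (chi μ A hA * f i)) • v i := by
          rw [Finset.smul_sum]; simp_rw [smul_smul]
      _ = ∑ i, (chi μ B hB * f i) • v i := by
          refine Finset.sum_congr rfl fun i _ => ?_
          rw [← mul_assoc, hchi]
  · intro f hf i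
    have h2 : (∑ j, (chi μ A hA * (chi μ B hB * f j)) • v j) = 0 := by
      have : ∀ j, chi μ A hA * (chi μ B hB * f j) = chi μ B hB * f j := fun j => by
        rw [← mul_assoc, mul_comm (chi μ A hA) (chi μ B hB), hchi]
      simp_rw [this]; exact hf
    have := h.2 _ h2 i
    rwa [← mul_assoc, mul_comm (chi μ A hA) (chi μ B hB), hchi] at this

end Lemmas2
section Lemmas3

variable {μ : Measure X} {M : Type*} [AddCommGroup M] [Module (X →ₘ[μ] ℝ) M]

theorem localBasisOn_empty (n : ℕ) :
    LocalBasisOn μ (∅ : Set X) MeasurableSet.empty (fun _ : Fin n => (0 : M)) := by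
  constructor
  · intro w
    exact ⟨fun _ => 0, by simp [chi_empty]⟩
  · intro f _ i
    simp [chi_empty]

/-- A countable disjoint union of sets carrying `n`-element local bases carries an
`n`-element local basis, provided `M` has the locality and glueing properties. -/
theorem localBasisOn_iUnion (hloc : Locality μ M) (hglue : Glueing μ M)
    {A : ℕ → Set X} (hA : ∀ k, MeasurableSet (A k))
    (hdisj : ∀ j k, j ≠ k → Disjoint (A j) (A k)) {n : ℕ} (v : ℕ → Fin n → M)
    (hv : ∀ k, LocalBasisOn μ (A k) (hA k) (v k)) :
    ∃ w : Fin n → M, LocalBasisOn μ (⋃ k, A k) (MeasurableSet.iUnion hA) w := by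
  have hwex := fun i : Fin n => hglue (fun k => v k i) A hA hdisj
  choose w hw using hwex
  set U := ⋃ k, A k with hU_def
  have hUmeas : MeasurableSet U := MeasurableSet.iUnion hA
  set χU := chi μ U hUmeas with hχU_def
  have hsub : ∀ k, chi μ (A k) (hA k) * χU = chi μ (A k) (hA k) := fun k => by
    rw [hχU_def, chi_mul]
    exact chi_congr (Set.inter_eq_left.2 (Set.subset_iUnion A k)) _ _
  have hUU : χU * χU = χU := by
    rw [hχU_def, chi_mul]; exact chi_congr (Set.inter_self U) _ _
  -- On each piece, `w` generates just as `v k` does.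
  have hswap : ∀ (k : ℕ) (g : X →ₘ[μ] ℝ) (i : Fin n),
      (chi μ (A k) (hA k) * g) • w i = (chi μ (A k) (hA k) * g) • v k i := by
    intro k g i
    rw [mul_comm, mul_smul, hw i k, ← mul_smul, mul_comm]
  refine ⟨w, ?_, ?_⟩
  · -- generation
    intro z
    have hgen : ∀ k, ∃ f : Fin n → (X →ₘ[μ] ℝ),
        chi μ (A k) (hA k) • z = ∑ i, (chi μ (A k) (hA k) * f i) • w i := by
      intro k
      obtain ⟨f, hf⟩ := (hv k).1 z
      exact ⟨f, by rw [hf]; exact Finset.sum_congr rfl fun i _ => (hswap k (f i) i).symm⟩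
    choose F hF using hgen
    have hglueF := fun i : Fin n => exists_glue_fun hA hdisj (fun k => F k i)
    choose f hf using hglueF
    refine ⟨f, ?_⟩
    set u : M := χU • z - ∑ i, (χU * f i) • w i with hu_def
    have hk : ∀ k, chi μ (A k) (hA k) • u = 0 := by
      intro k
      rw [hu_def, smul_sub, smul_smul, hsub, Finset.smul_sum]
      have : ∀ i : Fin n, chi μ (A k) (hA k) • ((χU * f i) • w i)
          = (chi μ (A k) (hA k) * F k i) • w i := by
        intro i
        rw [smul_smul, ← mul_assoc, hsub, hf i k]
      simp_rw [this]
      rw [← hF k, sub_self]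
    have h0 : χU • u = 0 := hloc u A hA hk
    have hidem : χU • u = u := by
      rw [hu_def, smul_sub, smul_smul, hUU, Finset.smul_sum]
      congr 1
      refine Finset.sum_congr rfl fun i _ => ?_
      rw [smul_smul, ← mul_assoc, hUU]
    rw [hidem] at h0
    rw [hu_def, sub_eq_zero] at h0
    exact h0
  · -- independence
    intro f hf i
    have hk : ∀ k, chi μ (A k) (hA k) * f i = 0 := by
      intro k
      have h2 : (∑ j, (chi μ (A k) (hA k) * f j) • v k j) = 0 := by
        have hz : chi μ (A k) (hA k) • (∑ j, (χU * f j) • w j) = 0 := by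
          rw [hf, smul_zero]
        rw [Finset.smul_sum] at hz
        have : ∀ j : Fin n, chi μ (A k) (hA k) • ((χU * f j) • w j)
            = (chi μ (A k) (hA k) * f j) • v k j := by
          intro j
          rw [smul_smul, ← mul_assoc, hsub, hswap]
        simp_rw [this] at hz
        exact hz
      exact (hv k).2 f h2 i
    exact chi_mul_eq_zero_of_forall hA (f i) hk

/-- `M` admits an `n`-element local basis on the Borel set `A`. -/
def Adm (μ : Measure X) (M : Type*) [AddCommGroup M] [Module (X →ₘ[μ] ℝ) M]
    (n : ℕ) (A : Set X) : Prop :=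
  ∃ (hA : MeasurableSet A) (v : Fin n → M), LocalBasisOn μ A hA v

theorem Adm.measurableSet {n : ℕ} {A : Set X} (h : Adm μ M n A) : MeasurableSet A := h.1

theorem adm_empty (n : ℕ) : Adm μ M n (∅ : Set X) :=
  ⟨MeasurableSet.empty, _, localBasisOn_empty n⟩

theorem Adm.mono {n : ℕ} {A B : Set X} (h : Adm μ M n A) (hBA : B ⊆ A)
    (hB : MeasurableSet B) : Adm μ M n B := by
  obtain ⟨hA, v, hv⟩ := h
  exact ⟨hB, v, hv.mono hA hB hBA⟩

theorem Adm.iUnion (hloc : Locality μ M) (hglue : Glueing μ M) {n : ℕ} {A : ℕ → Set X}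
    (h : ∀ k, Adm μ M n (A k)) (hdisj : ∀ j k, j ≠ k → Disjoint (A j) (A k)) :
    Adm μ M n (⋃ k, A k) := by
  have hA : ∀ k, MeasurableSet (A k) := fun k => (h k).measurableSet
  have hv : ∀ k, ∃ v : Fin n → M, LocalBasisOn μ (A k) (hA k) (v) := fun k => (h k).2
  choose v hv using hv
  obtain ⟨w, hw⟩ := localBasisOn_iUnion hloc hglue hA hdisj v hv
  exact ⟨MeasurableSet.iUnion hA, w, hw⟩

end Lemmas3
section Exhaustion

variable {μ : Measure X}

/-- Exhaustion lemma: a class of Borel sets containing `∅`, stable under Borel subsets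
and countable disjoint unions admits a set of maximal measure with respect to a finite
measure `ν`. -/
theorem exists_maximal_of_finiteMeasure (ν : Measure X) [IsFiniteMeasure ν]
    (P : Set X → Prop) (hPempty : P ∅)
    (hmeas : ∀ A, P A → MeasurableSet A)
    (hmono : ∀ A B, P A → B ⊆ A → MeasurableSet B → P B)
    (hunion : ∀ A : ℕ → Set X, (∀ k, P (A k)) →
      (∀ j k, j ≠ k → Disjoint (A j) (A k)) → P (⋃ k, A k)) :
    ∃ B, P B ∧ ∀ A, P A → Disjoint A B → ν A = 0 := by
  set S : Set ℝ := {r | ∃ A, P A ∧ (ν A).toReal = r} with hS_def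
  have hSne : S.Nonempty := ⟨(ν ∅).toReal, ∅, hPempty, rfl⟩
  have hSbdd : BddAbove S := by
    refine ⟨(ν Set.univ).toReal, fun r hr => ?_⟩
    obtain ⟨A, _, rfl⟩ := hr
    exact ENNReal.toReal_mono (measure_ne_top ν _) (measure_mono (Set.subset_univ A))
  set c : ℝ := sSup S with hc_def
  have hex : ∀ j : ℕ, ∃ A, P A ∧ c - 1 / (j + 1) < (ν A).toReal := by
    intro j
    have hlt : c - 1 / (j + 1 : ℝ) < c := by
      have : (0:ℝ) < 1 / (j + 1) := by positivity
      linarith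
    obtain ⟨r, hrS, hr⟩ := exists_lt_of_lt_csSup hSne hlt
    obtain ⟨A, hPA, rfl⟩ := hrS
    exact ⟨A, hPA, hr⟩
  choose A hPA hA using hex
  set B : Set X := ⋃ j, A j with hB_def
  have hPB : P B := by
    have h1 : ∀ j, P (disjointed A j) := fun j =>
      hmono _ _ (hPA j) (disjointed_subset A j)
        (MeasurableSet.disjointed (fun k => hmeas _ (hPA k)) j)
    have h2 : ∀ j k, j ≠ k → Disjoint (disjointed A j) (disjointed A k) :=
      fun j k h => disjoint_disjointed A h
    have := hunion _ h1 h2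
    rwa [iUnion_disjointed] at this
  have hBc : c ≤ (ν B).toReal := by
    by_contra hlt
    push_neg at hlt
    obtain ⟨j, hj⟩ := exists_nat_one_div_lt (by linarith : (0:ℝ) < c - (ν B).toReal)
    have h1 : (ν (A j)).toReal ≤ (ν B).toReal :=
      ENNReal.toReal_mono (measure_ne_top ν _) (measure_mono (Set.subset_iUnion A j))
    have h2 := hA j
    have : (j:ℝ) + 1 = ((j:ℕ) + 1 : ℕ) := by push_cast; ring
    linarith
  refine ⟨B, hPB, fun A' hPA' hdisj => ?_⟩
  -- `B ∪ A'` is again in the class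
  set F : ℕ → Set X := fun k => match k with | 0 => B | 1 => A' | _ => ∅ with hF_def
  have hPF : ∀ k, P (F k) := by
    intro k
    match k with
    | 0 => exact hPB
    | 1 => exact hPA'
    | (k+2) => exact hPempty
  have hFdisj : ∀ j k, j ≠ k → Disjoint (F j) (F k) := by
    intro j k hjk
    match j, k with
    | 0, 0 => exact absurd rfl hjk
    | 1, 1 => exact absurd rfl hjk
    | 0, 1 => exact hdisj.symm
    | 1, 0 => exact hdisj
    | (j+2), k => exact Set.empty_disjoint _
    | 0, (k+2) => exact Set.disjoint_empty _
    | 1, (k+2) => exact Set.disjoint_empty _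
  have hFU : (⋃ k, F k) = B ∪ A' := by
    apply Set.Subset.antisymm
    · refine Set.iUnion_subset fun k => ?_
      match k with
      | 0 => exact Set.subset_union_left
      | 1 => exact Set.subset_union_right
      | (k+2) => exact Set.empty_subset _
    · refine Set.union_subset ?_ ?_
      · exact Set.subset_iUnion F 0
      · exact Set.subset_iUnion F 1
  have hPBA : P (B ∪ A') := by
    have := hunion F hPF hFdisj
    rwa [hFU] at this
  have hle : (ν (B ∪ A')).toReal ≤ c := le_csSup hSbdd ⟨B ∪ A', hPBA, rfl⟩
  have hadd : ν (B ∪ A') = ν B + ν A' := by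
    rw [Set.union_comm, measure_union hdisj (hmeas _ hPB)]
    ring
  have htr : (ν (B ∪ A')).toReal = (ν B).toReal + (ν A').toReal := by
    rw [hadd, ENNReal.toReal_add (measure_ne_top ν _) (measure_ne_top ν _)]
  have hA'0 : (ν A').toReal ≤ 0 := by linarith
  have := ENNReal.toReal_nonneg (a := ν A')
  have h0 : (ν A').toReal = 0 := le_antisymm hA'0 this
  rcases ENNReal.toReal_eq_zero_iff _ |>.1 h0 with h | h
  · exact h
  · exact absurd h (measure_ne_top ν _)

end Exhaustion
/-- **Existence of the dimensional decomposition.** Let `M` be an `L⁰(m)`-module with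
the locality property and the glueing property, over a metric measure space `(X,d,m)`.
Then `M` admits a dimensional decomposition `(E_n)_{n ∈ ℕ ∪ {∞}}`. -/
theorem exists_dimensional_decomposition
    {X : Type*} [MetricSpace X] [CompleteSpace X] [SecondCountableTopology X]
    [MeasurableSpace X] [BorelSpace X]
    (μ : Measure X) [IsLocallyFiniteMeasure μ] (hμ : μ ≠ 0)
    (M : Type*) [AddCommGroup M] [Module (X →ₘ[μ] ℝ) M]
    (hloc : Locality μ M) (hglue : Glueing μ M) :
    ∃ (E : ℕ → Set X) (hE : ∀ n, MeasurableSet (E n))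
      (Einf : Set X) (hEinf : MeasurableSet Einf),
      DimDecomp μ M E hE Einf hEinf := by
  obtain ⟨ν, hνfin, hμν, hνμ⟩ := exists_isFiniteMeasure_absolutelyContinuous μ
  haveI := hνfin
  have hmax : ∀ n : ℕ, ∃ B, Adm μ M n B ∧ ∀ A, Adm μ M n A → Disjoint A B → ν A = 0 := by
    intro n
    exact exists_maximal_of_finiteMeasure ν (Adm μ M n) (adm_empty n)
      (fun A h => h.measurableSet) (fun A B h hBA hB => h.mono hBA hB)
      (fun A h hd => Adm.iUnion hloc hglue h hd)
  choose B hB hBmax using hmax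
  have hBmeas : ∀ n, MeasurableSet (B n) := fun n => (hB n).measurableSet
  refine ⟨disjointed B, fun n => MeasurableSet.disjointed hBmeas n, (⋃ n, B n)ᶜ,
    (MeasurableSet.iUnion hBmeas).compl, ?_, ?_, ?_, ?_, ?_⟩
  · exact fun n k h => disjoint_disjointed B h
  · intro n
    exact Set.disjoint_left.2 fun x hx hxc =>
      hxc (Set.mem_iUnion.2 ⟨n, disjointed_subset B n hx⟩)
  · rw [iUnion_disjointed, Set.union_compl_self]
  · intro n _
    have hAdm : Adm μ M n (disjointed B n) :=
      (hB n).mono (disjointed_subset B n) (MeasurableSet.disjointed hBmeas n)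
    obtain ⟨hmeas', v, hv⟩ := hAdm
    exact ⟨v, hv⟩
  · rintro A hA hsub hpos ⟨n, v, hv⟩
    have hAdm : Adm μ M n A := ⟨hA, v, hv⟩
    have hdisj : Disjoint A (B n) :=
      Set.disjoint_left.2 fun x hx hxB => (hsub hx) (Set.mem_iUnion.2 ⟨n, hxB⟩)
    exact absurd (hμν (hBmax n A hAdm hdisj)) hpos.ne'

end L0SerreSwan
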